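/- Let n ≥ 3 and let (A, B) be a minimal mutually orthogonal pair of n×n normal matrices over R = {0, −1}. Then there exist at least three pairwise distinct indices i ∈ [n] such that 2 ≤ Σ(i) ≤ 3, where Σ(i) = #{j ≠ i : A_{ij} = 0} + #{j ≠ i : B_{ij} = 0}. -/
import Mathlib


/-- A matrix over `R = {0,-1} ⊆ ℤ` is normal: zero diagonal, entries `0` or `-1`. -/
def IsNormal {n : ℕ} (A : Matrix (Fin n) (Fin n) ℤ) : Prop :=
  (∀ i, A i i = 0) ∧ ∀ i j, A i j = 0 ∨ A i j = -1

/-- Tropical (max-plus) matrix product: `(A⊙B) i j = max_k (A i k + B k j)`. -/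
noncomputable def tropMul {n : ℕ} (A B : Matrix (Fin n) (Fin n) ℤ) :
    Matrix (Fin n) (Fin n) ℤ :=
  Matrix.of fun i j => sSup (Set.range fun k => A i k + B k j)

/-- Tropical sum: entrywise maximum. -/
def tropSum {n : ℕ} (A B : Matrix (Fin n) (Fin n) ℤ) : Matrix (Fin n) (Fin n) ℤ :=
  Matrix.of fun i j => max (A i j) (B i j)

/-- `nu A` is the number of zero entries of `A`. -/
def nu {n : ℕ} (A : Matrix (Fin n) (Fin n) ℤ) : ℕ :=
  (Finset.univ.filter (fun p : Fin n × Fin n => A p.1 p.2 = 0)).card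

/-- Number of off-diagonal zero entries in the `i`-th row of `A`. -/
def rowZeros {n : ℕ} (A : Matrix (Fin n) (Fin n) ℤ) (i : Fin n) : ℕ :=
  (Finset.univ.filter (fun j => j ≠ i ∧ A i j = 0)).card

lemma tropMul_eq_zero_iff {n : ℕ} (hn : 0 < n) {A B : Matrix (Fin n) (Fin n) ℤ}
    (hA : ∀ i j, A i j ≤ 0) (hB : ∀ i j, B i j ≤ 0) :
    tropMul A B = 0 ↔ ∀ i j, ∃ k, A i k = 0 ∧ B k j = 0 := by
  have hne : Nonempty (Fin n) := ⟨⟨0, hn⟩⟩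
  constructor
  · intro h i j
    have h0 : sSup (Set.range fun k => A i k + B k j) = 0 := by
      have := congrFun (congrFun h i) j
      simpa [tropMul] using this
    have hmem : (0 : ℤ) ∈ Set.range fun k => A i k + B k j := by
      rw [← h0]
      exact Set.Nonempty.csSup_mem (Set.range_nonempty _) (Set.finite_range _)
    obtain ⟨k, hk⟩ := hmem
    have hk' : A i k + B k j = 0 := hk
    have h1 := hA i k
    have h2 := hB k j
    exact ⟨k, by omega, by omega⟩
  · intro h
    ext i j
    obtain ⟨k, hk1, hk2⟩ := h i j
    show sSup (Set.range fun k => A i k + B k j) = 0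
    apply le_antisymm
    · apply csSup_le (Set.range_nonempty _)
      rintro x ⟨m, rfl⟩
      have := hA i m; have := hB m j
      simp only []
      omega
    · apply le_csSup (Set.finite_range _).bddAbove
      exact ⟨k, by simp [hk1, hk2]⟩

lemma nu_eq {n : ℕ} (A : Matrix (Fin n) (Fin n) ℤ) (hA : ∀ i, A i i = 0) :
    nu A = n + ∑ i, rowZeros A i := by
  have key : ∀ i : Fin n,
      (Finset.univ.filter (fun j => A i j = 0)).card = 1 + rowZeros A i := by
    intro i
    rw [rowZeros, Finset.card_filter, Finset.card_filter]
    have : ∀ j : Fin n, (if A i j = 0 then 1 else 0) =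
        (if j = i then 1 else 0) + (if j ≠ i ∧ A i j = 0 then 1 else 0) := by
      intro j
      by_cases hj : j = i
      · subst hj; simp [hA j]
      · simp [hj]
    rw [Finset.sum_congr rfl (fun j _ => this j), Finset.sum_add_distrib]
    simp
  rw [nu, Finset.card_filter, Fintype.sum_prod_type]
  have : ∀ i : Fin n, (∑ j, if A i j = 0 then (1:ℕ) else 0) = 1 + rowZeros A i := by
    intro i
    rw [← key i, Finset.card_filter]
  rw [Finset.sum_congr rfl (fun i _ => this i), Finset.sum_add_distrib]
  simp [add_comm]

lemma rowZeros_le {n : ℕ} (A : Matrix (Fin n) (Fin n) ℤ) (i : Fin n) :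
    rowZeros A i ≤ n - 1 := by
  have h : (Finset.univ.filter (fun j => j ≠ i ∧ A i j = 0)) ⊆ Finset.univ.erase i := by
    intro j hj
    simp only [Finset.mem_filter] at hj
    exact Finset.mem_erase.2 ⟨hj.2.1, Finset.mem_univ j⟩
  calc rowZeros A i ≤ (Finset.univ.erase i).card := Finset.card_le_card h
    _ = n - 1 := by rw [Finset.card_erase_of_mem (Finset.mem_univ i)]; simp

lemma rowZeros_le_one {n : ℕ} (A : Matrix (Fin n) (Fin n) ℤ) (i c : Fin n)
    (h : ∀ j, j ≠ i → A i j = 0 → j = c) : rowZeros A i ≤ 1 := by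
  have hs : (Finset.univ.filter (fun j => j ≠ i ∧ A i j = 0)) ⊆ {c} := by
    intro j hj
    simp only [Finset.mem_filter] at hj
    exact Finset.mem_singleton.2 (h j hj.2.1 hj.2.2)
  calc rowZeros A i ≤ ({c} : Finset (Fin n)).card := Finset.card_le_card hs
    _ = 1 := Finset.card_singleton c

lemma rowZeros_eq_zero {n : ℕ} (A : Matrix (Fin n) (Fin n) ℤ) (i : Fin n)
    (h : ∀ j, j ≠ i → A i j ≠ 0) : rowZeros A i = 0 := by
  rw [rowZeros, Finset.card_eq_zero, Finset.filter_eq_empty_iff]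
  intro j _
  rintro ⟨hj, hj0⟩
  exact h j hj hj0

lemma normal_nonpos {n : ℕ} {A : Matrix (Fin n) (Fin n) ℤ} (hA : IsNormal A) :
    ∀ i j, A i j ≤ 0 := by
  intro i j; rcases hA.2 i j with h | h <;> omega

theorem stmt_9 {n : ℕ} (hn : 3 ≤ n) (A B : Matrix (Fin n) (Fin n) ℤ)
    (hA : IsNormal A) (hB : IsNormal B)
    (h1 : tropMul A B = 0) (h2 : tropMul B A = 0)
    (hmin : ∀ A' B' : Matrix (Fin n) (Fin n) ℤ, IsNormal A' → IsNormal B' →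
      tropMul A' B' = 0 → tropMul B' A' = 0 → nu A + nu B ≤ nu A' + nu B') :
    ∃ i₁ i₂ i₃ : Fin n, i₁ ≠ i₂ ∧ i₁ ≠ i₃ ∧ i₂ ≠ i₃ ∧
      (2 ≤ rowZeros A i₁ + rowZeros B i₁ ∧ rowZeros A i₁ + rowZeros B i₁ ≤ 3) ∧
      (2 ≤ rowZeros A i₂ + rowZeros B i₂ ∧ rowZeros A i₂ + rowZeros B i₂ ≤ 3) ∧
      (2 ≤ rowZeros A i₃ + rowZeros B i₃ ∧ rowZeros A i₃ + rowZeros B i₃ ≤ 3) := by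
  have hn0 : 0 < n := by omega
  set i0 : Fin n := ⟨0, by omega⟩ with hi0
  set i1 : Fin n := ⟨1, by omega⟩ with hi1
  have hi01 : i0 ≠ i1 := by simp [hi0, hi1, Fin.ext_iff]
  -- the construction
  set A' : Matrix (Fin n) (Fin n) ℤ :=
    Matrix.of (fun i j => if i = i0 ∨ j = i ∨ j = i1 then 0 else -1) with hA'
  set B' : Matrix (Fin n) (Fin n) ℤ :=
    Matrix.of (fun i j => if i = i1 ∨ j = i ∨ j = i0 then 0 else -1) with hB'
  have hA'e : ∀ i j, A' i j = if i = i0 ∨ j = i ∨ j = i1 then 0 else -1 := fun i j => rfl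
  have hB'e : ∀ i j, B' i j = if i = i1 ∨ j = i ∨ j = i0 then 0 else -1 := fun i j => rfl
  have hA'n : IsNormal A' := by
    constructor
    · intro i; rw [hA'e]; simp
    · intro i j; rw [hA'e]; split_ifs <;> simp
  have hB'n : IsNormal B' := by
    constructor
    · intro i; rw [hB'e]; simp
    · intro i j; rw [hB'e]; split_ifs <;> simp
  have horth1 : tropMul A' B' = 0 := by
    rw [tropMul_eq_zero_iff hn0 (normal_nonpos hA'n) (normal_nonpos hB'n)]
    intro i j
    refine ⟨i1, ?_, ?_⟩
    · rw [hA'e]; simp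
    · rw [hB'e]; simp
  have horth2 : tropMul B' A' = 0 := by
    rw [tropMul_eq_zero_iff hn0 (normal_nonpos hB'n) (normal_nonpos hA'n)]
    intro i j
    refine ⟨i0, ?_, ?_⟩
    · rw [hB'e]; simp
    · rw [hA'e]; simp
  -- row zero bounds for the construction
  have hrowbound : ∀ i : Fin n, rowZeros A' i + rowZeros B' i ≤
      (if i = i0 then n - 3 else 0) + (if i = i1 then n - 3 else 0) + 2 := by
    intro i
    by_cases h0 : i = i0
    · subst h0
      have hbA := rowZeros_le A' i0
      have hbB : rowZeros B' i0 = 0 := by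
        apply rowZeros_eq_zero
        intro j hj
        rw [hB'e]
        have : ¬(i0 = i1 ∨ j = i0 ∨ j = i0) := by
          rintro (h | h | h)
          exacts [hi01 h, hj h, hj h]
        rw [if_neg this]
        norm_num
      simp [hi01, hbB]
      omega
    · by_cases h1' : i = i1
      · subst h1'
        have hbB := rowZeros_le B' i1
        have hbA : rowZeros A' i1 = 0 := by
          apply rowZeros_eq_zero
          intro j hj
          rw [hA'e]
          have : ¬(i1 = i0 ∨ j = i1 ∨ j = i1) := by
            rintro (h | h | h)
            exacts [hi01 h.symm, hj h, hj h]
          rw [if_neg this]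
          norm_num
        simp [h0, hbA]
        omega
      · have hbA : rowZeros A' i ≤ 1 := by
          apply rowZeros_le_one A' i i1
          intro j hj hj0
          rw [hA'e] at hj0
          by_contra hji1
          have : ¬(i = i0 ∨ j = i ∨ j = i1) := by push_neg; exact ⟨h0, hj, hji1⟩
          rw [if_neg this] at hj0
          exact absurd hj0 (by norm_num)
        have hbB : rowZeros B' i ≤ 1 := by
          apply rowZeros_le_one B' i i0
          intro j hj hj0
          rw [hB'e] at hj0
          by_contra hji0
          have : ¬(i = i1 ∨ j = i ∨ j = i0) := by push_neg; exact ⟨h1', hj, hji0⟩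
          rw [if_neg this] at hj0
          exact absurd hj0 (by norm_num)
        simp [h0, h1']
        omega
  -- total sum bound
  have hsum' : ∑ i, (rowZeros A' i + rowZeros B' i) + 6 ≤ 4 * n := by
    calc ∑ i, (rowZeros A' i + rowZeros B' i) + 6
        ≤ (∑ i : Fin n, ((if i = i0 then n - 3 else 0) + (if i = i1 then n - 3 else 0) + 2)) + 6 :=
          by exact Nat.add_le_add_right (Finset.sum_le_sum (fun i _ => hrowbound i)) 6
      _ = ((n - 3) + (n - 3) + 2 * n) + 6 := by
          rw [Finset.sum_add_distrib, Finset.sum_add_distrib]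
          simp [Finset.sum_ite_eq', mul_comm]
      _ ≤ 4 * n := by omega
  -- minimality transfers the bound
  have hmin' := hmin A' B' hA'n hB'n horth1 horth2
  have hsum : ∑ i, (rowZeros A i + rowZeros B i) + 6 ≤ 4 * n := by
    have e1 := nu_eq A hA.1
    have e2 := nu_eq B hB.1
    have e3 := nu_eq A' hA'n.1
    have e4 := nu_eq B' hB'n.1
    rw [Finset.sum_add_distrib] at hsum' ⊢
    omega
  -- lower bound: every row has at least 2 zeros
  have hlow : ∀ i : Fin n, 2 ≤ rowZeros A i + rowZeros B i := by
    intro i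
    by_contra hcon
    push_neg at hcon
    -- pick two distinct indices ≠ i
    obtain ⟨j1, hj1, j2, hj2, hj12⟩ :
        ∃ j1 ∈ Finset.univ.erase i, ∃ j2 ∈ Finset.univ.erase i, j1 ≠ j2 := by
      apply Finset.one_lt_card.1
      rw [Finset.card_erase_of_mem (Finset.mem_univ i)]
      simp; omega
    have hj1i : j1 ≠ i := (Finset.mem_erase.1 hj1).1
    have hj2i : j2 ≠ i := (Finset.mem_erase.1 hj2).1
    have hAB := (tropMul_eq_zero_iff hn0 (normal_nonpos hA) (normal_nonpos hB)).1 h1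
    have hBA := (tropMul_eq_zero_iff hn0 (normal_nonpos hB) (normal_nonpos hA)).1 h2
    have hcase : ∀ j, j ≠ i → ((∃ k, k ≠ i ∧ A i k = 0) ∨ B i j = 0) := by
      intro j hj
      obtain ⟨k, hk1, hk2⟩ := hAB i j
      by_cases hki : k = i
      · subst hki; exact Or.inr hk2
      · exact Or.inl ⟨k, hki, hk1⟩
    have hcase' : ∀ j, j ≠ i → ((∃ k, k ≠ i ∧ B i k = 0) ∨ A i j = 0) := by
      intro j hj
      obtain ⟨k, hk1, hk2⟩ := hBA i j
      by_cases hki : k = i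
      · subst hki; exact Or.inr hk2
      · exact Or.inl ⟨k, hki, hk1⟩
    have hApos : (∃ k, k ≠ i ∧ A i k = 0) → 1 ≤ rowZeros A i := by
      rintro ⟨k, hk1, hk2⟩
      apply Finset.card_pos.2
      exact ⟨k, Finset.mem_filter.2 ⟨Finset.mem_univ k, hk1, hk2⟩⟩
    have hBpos : (∃ k, k ≠ i ∧ B i k = 0) → 1 ≤ rowZeros B i := by
      rintro ⟨k, hk1, hk2⟩
      apply Finset.card_pos.2
      exact ⟨k, Finset.mem_filter.2 ⟨Finset.mem_univ k, hk1, hk2⟩⟩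
    have htwo : ∀ M : Matrix (Fin n) (Fin n) ℤ, M i j1 = 0 → M i j2 = 0 →
        2 ≤ rowZeros M i := by
      intro M hm1 hm2
      have : ({j1, j2} : Finset (Fin n)) ⊆
          Finset.univ.filter (fun j => j ≠ i ∧ M i j = 0) := by
        intro x hx
        rcases Finset.mem_insert.1 hx with h | h
        · subst h; exact Finset.mem_filter.2 ⟨Finset.mem_univ _, hj1i, hm1⟩
        · rw [Finset.mem_singleton.1 h]
          exact Finset.mem_filter.2 ⟨Finset.mem_univ _, hj2i, hm2⟩
      calc 2 = ({j1, j2} : Finset (Fin n)).card := by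
              rw [Finset.card_insert_of_notMem (by simp [hj12]), Finset.card_singleton]
        _ ≤ _ := Finset.card_le_card this
    rcases hcase j1 hj1i with hA1 | hB1
    · rcases hcase' j1 hj1i with hB2 | hA2
      · have := hApos hA1; have := hBpos hB2; omega
      · -- A i j1 = 0 and ∃ k ≠ i, A i k = 0: rowZeros A i ≥ 1; also need 1 more
        have ha := hApos hA1
        rcases hcase' j2 hj2i with hB2 | hA2'
        · have := hBpos hB2; omega
        · have := htwo A hA2 hA2'; omega
    · -- B i j1 = 0
      rcases hcase j2 hj2i with hA1 | hB2
      · have := hApos hA1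
        have hb : 1 ≤ rowZeros B i := by
          apply Finset.card_pos.2
          exact ⟨j1, Finset.mem_filter.2 ⟨Finset.mem_univ _, hj1i, hB1⟩⟩
        omega
      · have := htwo B hB1 hB2; omega
  -- counting argument
  set s := Finset.univ.filter (fun i : Fin n => rowZeros A i + rowZeros B i ≤ 3) with hs
  have hscard : 3 ≤ s.card := by
    by_contra hcon
    push_neg at hcon
    have hsplit := Finset.sum_filter_add_sum_filter_not Finset.univ
      (fun i : Fin n => rowZeros A i + rowZeros B i ≤ 3)
      (fun i => rowZeros A i + rowZeros B i)
    rw [← hs] at hsplit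
    have hb1 : 2 * s.card ≤ ∑ i ∈ s, (rowZeros A i + rowZeros B i) := by
      calc 2 * s.card = ∑ i ∈ s, 2 := by rw [Finset.sum_const]; ring
        _ ≤ _ := Finset.sum_le_sum (fun i _ => hlow i)
    have hb2 : 4 * (n - s.card) ≤
        ∑ i ∈ Finset.univ.filter (fun i : Fin n => ¬(rowZeros A i + rowZeros B i ≤ 3)),
          (rowZeros A i + rowZeros B i) := by
      have hc : (Finset.univ.filter
          (fun i : Fin n => ¬(rowZeros A i + rowZeros B i ≤ 3))).card = n - s.card := by
        have := Finset.card_filter_add_card_filter_not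
          (s := (Finset.univ : Finset (Fin n)))
          (p := fun i : Fin n => rowZeros A i + rowZeros B i ≤ 3)
        rw [← hs] at this
        simp only [Finset.card_univ, Fintype.card_fin] at this
        omega
      calc 4 * (n - s.card) = ∑ i ∈ Finset.univ.filter
            (fun i : Fin n => ¬(rowZeros A i + rowZeros B i ≤ 3)), 4 := by
              rw [Finset.sum_const, hc]; ring
        _ ≤ _ := Finset.sum_le_sum (fun i hi => by
            simp only [Finset.mem_filter] at hi; omega)
    have hcard_le : s.card ≤ n := by
      calc s.card ≤ (Finset.univ : Finset (Fin n)).card := Finset.card_le_card (Finset.filter_subset _ _)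
        _ = n := by simp
    omega
  -- extract three distinct elements
  obtain ⟨i₁, hi₁⟩ := Finset.card_pos.1 (by omega : 0 < s.card)
  have h2c : 0 < (s.erase i₁).card := by
    rw [Finset.card_erase_of_mem hi₁]; omega
  obtain ⟨i₂, hi₂⟩ := Finset.card_pos.1 h2c
  have h3c : 0 < ((s.erase i₁).erase i₂).card := by
    rw [Finset.card_erase_of_mem hi₂, Finset.card_erase_of_mem hi₁]; omega
  obtain ⟨i₃, hi₃⟩ := Finset.card_pos.1 h3c
  have hi₂s : i₂ ∈ s := Finset.mem_of_mem_erase hi₂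
  have hi₃s : i₃ ∈ s := Finset.mem_of_mem_erase (Finset.mem_of_mem_erase hi₃)
  have h12 : i₁ ≠ i₂ := fun h => (Finset.mem_erase.1 hi₂).1 h.symm
  have h23 : i₂ ≠ i₃ := fun h => (Finset.mem_erase.1 hi₃).1 h.symm
  have h13 : i₁ ≠ i₃ := fun h => (Finset.mem_erase.1 (Finset.mem_of_mem_erase hi₃)).1 h.symm
  have m1 := Finset.mem_filter.1 hi₁
  have m2 := Finset.mem_filter.1 hi₂s
  have m3 := Finset.mem_filter.1 hi₃s
  exact ⟨i₁, i₂, i₃, h12, h13, h23,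
    ⟨hlow i₁, m1.2⟩, ⟨hlow i₂, m2.2⟩, ⟨hlow i₃, m3.2⟩⟩
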